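/- Let H be a finite-dimensional real Hilbert space, D a symmetric dictionary in H, C = (c_n) a sequence of positive coefficients, and τ = (t_n) a sequence in (0,1] such that ∑ c_n t_n = ∞ and c_n/t_n → 0. Then for every f ∈ H, every realization of the greedy expansion of f with prescribed coefficients C and weakening sequence τ with respect to D converges to f; i.e., the remainders f_n = f - ∑_{m=1}^n c_m φ_m satisfy ‖f_n‖ → 0, where at each step φ_{m} ∈ D is chosen with ⟨f_{m-1}, φ_m⟩ ≥ t_m sup_{g∈D} ⟨f_{m-1}, g⟩. -/

import Mathlib

open RealInnerProductSpace Filter Pointwise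

theorem stmt_3 (H : Type*) [NormedAddCommGroup H] [InnerProductSpace ℝ H]
    [FiniteDimensional ℝ H] (D : Set H)
    (hunit : ∀ g ∈ D, ‖g‖ = 1)
    (hsymm : ∀ g ∈ D, -g ∈ D)
    (hcomplete : (Submodule.span ℝ D).topologicalClosure = ⊤)
    (c t : ℕ → ℝ)
    (hc : ∀ n, 0 < c n) (ht : ∀ n, t n ∈ Set.Ioc (0 : ℝ) 1)
    (hdiv : Tendsto (fun n => ∑ m ∈ Finset.range n, c m * t m) atTop atTop)
    (hratio : Tendsto (fun n => c n / t n) atTop (nhds 0))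
    (f : H) (φ F : ℕ → H)
    (hφD : ∀ m, φ m ∈ D)
    (hF0 : F 0 = f)
    (hsel : ∀ m, t m * sSup ((fun g => ⟪F m, g⟫) '' D) ≤ ⟪F m, φ m⟫)
    (hrec : ∀ m, F (m + 1) = F m - c m • φ m) :
    Tendsto (fun n => ‖F n‖) atTop (nhds 0) := by
  rcases subsingleton_or_nontrivial H with hsub | hnt
  · have h0 : ∀ n, ‖F n‖ = 0 := fun n => by
      rw [Subsingleton.elim (F n) 0, norm_zero]
    simpa [h0] using (tendsto_const_nhds : Tendsto (fun _ : ℕ => (0:ℝ)) atTop (nhds 0))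
  -- basic facts about the dictionary
  have hspan : Submodule.span ℝ D = ⊤ := by
    rw [← hcomplete]
    exact ((Submodule.span ℝ D).closed_of_finiteDimensional.submodule_topologicalClosure_eq).symm
  have hDne : D.Nonempty := by
    by_contra h
    rw [Set.not_nonempty_iff_eq_empty] at h
    rw [h, Submodule.span_empty] at hspan
    exact bot_ne_top hspan
  set S : H → Set ℝ := fun x => (fun g => ⟪x, g⟫) '' D with hSdef
  have hSne : ∀ x, (S x).Nonempty := fun x => hDne.image _
  have hbdd : ∀ x, BddAbove (S x) := by
    intro x
    refine ⟨‖x‖, ?_⟩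
    rintro _ ⟨g, hg, rfl⟩
    calc ⟪x, g⟫ ≤ ‖x‖ * ‖g‖ := real_inner_le_norm x g
      _ = ‖x‖ := by rw [hunit g hg, mul_one]
  set r : H → ℝ := fun x => sSup (S x) with hrdef
  have hub : ∀ x, ∀ g ∈ D, ⟪x, g⟫ ≤ r x := fun x g hg => le_csSup (hbdd x) ⟨g, hg, rfl⟩
  -- positivity of r on nonzero vectors
  have hrpos : ∀ x : H, x ≠ 0 → 0 < r x := by
    intro x hx
    have hexists : ∃ g ∈ D, 0 < ⟪x, g⟫ := by
      by_contra hcon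
      push_neg at hcon
      have hall : ∀ g ∈ D, ⟪x, g⟫ = 0 := by
        intro g hg
        have h1 := hcon g hg
        have h2 := hcon (-g) (hsymm g hg)
        rw [inner_neg_right] at h2
        linarith
      have hzero : ∀ y ∈ Submodule.span ℝ D, ⟪x, y⟫ = (0:ℝ) := by
        intro y hy
        induction hy using Submodule.span_induction with
        | mem g hg => exact hall g hg
        | zero => exact inner_zero_right x
        | add u v _ _ hu hv => rw [inner_add_right, hu, hv, add_zero]
        | smul a u _ hu => rw [real_inner_smul_right, hu, mul_zero]
      have hxx : ⟪x, x⟫ = (0:ℝ) := hzero x (hspan ▸ Submodule.mem_top)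
      exact hx (inner_self_eq_zero.mp hxx)
    obtain ⟨g, hg, hpos⟩ := hexists
    exact lt_of_lt_of_le hpos (hub x g hg)
  -- Lipschitz
  have hlip : ∀ x y : H, r x ≤ r y + ‖x - y‖ := by
    intro x y
    refine csSup_le (hSne x) ?_
    rintro _ ⟨g, hg, rfl⟩
    have h1 : ⟪x - y, g⟫ = ⟪x, g⟫ - ⟪y, g⟫ := inner_sub_left x y g
    have h2 : ⟪x - y, g⟫ ≤ ‖x - y‖ := by
      calc ⟪x - y, g⟫ ≤ ‖x - y‖ * ‖g‖ := real_inner_le_norm _ _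
        _ = ‖x - y‖ := by rw [hunit g hg, mul_one]
    have h3 := hub y g hg
    linarith
  have hcont : Continuous r := by
    refine LipschitzWith.continuous (K := 1) ?_
    refine LipschitzWith.of_dist_le_mul ?_
    intro x y
    rw [Real.dist_eq, abs_sub_le_iff, NNReal.coe_one, one_mul]
    constructor
    · have := hlip x y; rw [dist_eq_norm]; linarith
    · have := hlip y x; rw [dist_eq_norm, ← norm_neg]; simp only [neg_sub]; linarith
  -- the constant δ
  obtain ⟨u, huS, hmin⟩ := (isCompact_sphere (0:H) 1).exists_isMinOn
    (NormedSpace.sphere_nonempty.mpr zero_le_one) hcont.continuousOn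
  have hun : ‖u‖ = 1 := by simpa using mem_sphere_zero_iff_norm.mp huS
  set δ : ℝ := min (r u) 1 with hδdef
  have hδpos : 0 < δ := lt_min (hrpos u (by intro h; rw [h, norm_zero] at hun; norm_num at hun)) one_pos
  have hδ1 : δ ≤ 1 := min_le_right _ _
  have hδkey : ∀ x : H, δ * ‖x‖ ≤ r x := by
    intro x
    rcases eq_or_ne x 0 with rfl | hx
    · simp only [norm_zero, mul_zero]
      obtain ⟨g, hg⟩ := hDne
      have := hub 0 g hg
      simpa using this
    · have hxn : (0:ℝ) < ‖x‖ := norm_pos_iff.mpr hx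
      set u' : H := ‖x‖⁻¹ • x with hu'
      have hu'n : ‖u'‖ = 1 := by
        rw [hu', norm_smul, norm_inv, norm_norm, inv_mul_cancel₀ (ne_of_gt hxn)]
      have hmem : u' ∈ Metric.sphere (0:H) 1 := by
        rw [mem_sphere_zero_iff_norm]; exact hu'n
      have h1 : δ ≤ r u' := le_trans (min_le_left _ _) (hmin hmem)
      -- homogeneity: S x = ‖x‖ • S u'
      have hx' : x = ‖x‖ • u' := by rw [hu', smul_smul, mul_inv_cancel₀ (ne_of_gt hxn), one_smul]
      have hSx : S x = ‖x‖ • S u' := by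
        show (fun g => ⟪x, g⟫) '' D = ‖x‖ • ((fun g => ⟪u', g⟫) '' D)
        rw [← Set.image_smul, Set.image_image]
        refine Set.image_congr fun g _ => ?_
        rw [smul_eq_mul, ← real_inner_smul_left, ← hx']
      have h2 : r x = ‖x‖ * r u' := by
        show sSup (S x) = ‖x‖ * sSup (S u')
        rw [hSx, Real.sSup_smul_of_nonneg (le_of_lt hxn), smul_eq_mul]
      rw [h2, mul_comm]
      exact mul_le_mul_of_nonneg_left h1 (le_of_lt hxn)
  -- key inequalities
  have hkey : ∀ n, ‖F (n+1)‖^2 ≤ ‖F n‖^2 - 2 * (c n * t n) * (δ * ‖F n‖) + (c n)^2 := by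
    intro n
    have hφn : ‖φ n‖ = 1 := hunit _ (hφD n)
    have hexp : ‖F (n+1)‖^2 = ‖F n‖^2 - 2 * (c n * ⟪F n, φ n⟫) + (c n)^2 := by
      rw [hrec n, norm_sub_sq_real, real_inner_smul_right, norm_smul, hφn, mul_one,
        Real.norm_eq_abs, sq_abs]
    rw [hexp]
    have h1 : t n * (δ * ‖F n‖) ≤ ⟪F n, φ n⟫ := by
      refine le_trans ?_ (hsel n)
      exact mul_le_mul_of_nonneg_left (hδkey (F n)) (le_of_lt (ht n).1)
    nlinarith [hc n, (ht n).1, mul_pos (hc n) (ht n).1]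
  have htri : ∀ n, ‖F (n+1)‖ ≤ ‖F n‖ + c n := by
    intro n
    rw [hrec n]
    calc ‖F n - c n • φ n‖ ≤ ‖F n‖ + ‖c n • φ n‖ := norm_sub_le _ _
      _ = ‖F n‖ + c n := by
        rw [norm_smul, hunit _ (hφD n), mul_one, Real.norm_eq_abs, abs_of_pos (hc n)]
  -- main argument
  rw [Metric.tendsto_atTop]
  intro ε hε
  set ε' : ℝ := ε / 3 with hε'def
  have hε'pos : 0 < ε' := by positivity
  -- N₁ : beyond which c n < δ * ε' * t n
  obtain ⟨N₁, hN₁⟩ := (Metric.tendsto_atTop.mp hratio) (δ * ε') (mul_pos hδpos hε'pos)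
  have hcsmall : ∀ n ≥ N₁, c n < δ * ε' * t n := by
    intro n hn
    have := hN₁ n hn
    rw [Real.dist_eq, sub_zero, abs_of_pos (div_pos (hc n) (ht n).1)] at this
    rw [div_lt_iff₀ (ht n).1] at this
    linarith
  have hcε' : ∀ n ≥ N₁, c n < ε' := by
    intro n hn
    calc c n < δ * ε' * t n := hcsmall n hn
      _ ≤ 1 * ε' * 1 := by
        apply mul_le_mul (mul_le_mul hδ1 le_rfl (le_of_lt hε'pos) zero_le_one) (ht n).2
          (le_of_lt (ht n).1) (by linarith)
      _ = ε' := by ring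
  -- decrement inequality when the norm is large
  have hdec : ∀ n ≥ N₁, ε' ≤ ‖F n‖ →
      ‖F (n+1)‖^2 ≤ ‖F n‖^2 - δ * ε' * (c n * t n) := by
    intro n hn hbig
    have h1 := hkey n
    have h2 : c n ^ 2 ≤ (δ * ε' * t n) * c n := by
      have := hcsmall n hn
      nlinarith [hc n]
    have h3 : 2 * (c n * t n) * (δ * ε') ≤ 2 * (c n * t n) * (δ * ‖F n‖) := by
      apply mul_le_mul_of_nonneg_left _
        (by nlinarith [hc n, (ht n).1] : (0:ℝ) ≤ 2 * (c n * t n))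
      exact mul_le_mul_of_nonneg_left hbig (le_of_lt hδpos)
    nlinarith
  -- there exists M ≥ N₁ with ‖F M‖ < ε'
  have hM : ∃ M ≥ N₁, ‖F M‖ < ε' := by
    by_contra hcon
    push_neg at hcon
    have hbig : ∀ m ≥ N₁, ε' ≤ ‖F m‖ := hcon
    have hind : ∀ k, ‖F (N₁ + k)‖^2 ≤ ‖F N₁‖^2 -
        δ * ε' * ∑ j ∈ Finset.range k, c (N₁ + j) * t (N₁ + j) := by
      intro k
      induction k with
      | zero => simp
      | succ k ih =>
        have := hdec (N₁ + k) (Nat.le_add_right _ _) (hbig _ (Nat.le_add_right _ _))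
        rw [Finset.sum_range_succ]
        have heq : N₁ + (k + 1) = (N₁ + k) + 1 := by ring
        rw [heq]
        linarith
    -- tail sums tend to infinity
    have htail : Tendsto (fun k => ∑ j ∈ Finset.range k, c (N₁ + j) * t (N₁ + j)) atTop atTop := by
      have hadd : Tendsto (fun k => N₁ + k) atTop atTop := by
        simpa [add_comm] using tendsto_add_atTop_nat N₁
      have h1 : Tendsto (fun k => ∑ m ∈ Finset.range (N₁ + k), c m * t m) atTop atTop :=
        hdiv.comp hadd
      have h2 : ∀ k, ∑ j ∈ Finset.range k, c (N₁ + j) * t (N₁ + j) =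
          (∑ m ∈ Finset.range (N₁ + k), c m * t m) - ∑ m ∈ Finset.range N₁, c m * t m := by
        intro k
        rw [Finset.sum_range_add]
        ring
      simp only [h2, sub_eq_add_neg]
      exact tendsto_atTop_add_const_right atTop _ h1
    obtain ⟨k, hk⟩ := (htail.eventually_ge_atTop ((‖F N₁‖^2 + 1) / (δ * ε'))).exists
    have := hind k
    have hge : δ * ε' * ∑ j ∈ Finset.range k, c (N₁ + j) * t (N₁ + j) ≥ ‖F N₁‖^2 + 1 := by
      rw [ge_iff_le, ← div_le_iff₀' (mul_pos hδpos hε'pos)]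
      exact hk
    nlinarith [sq_nonneg ‖F (N₁ + k)‖]
  obtain ⟨M, hMN, hMε⟩ := hM
  -- from M on, norms stay below 2 ε'
  have hstay : ∀ n ≥ M, ‖F n‖ ≤ 2 * ε' := by
    intro n hn
    induction n, hn using Nat.le_induction with
    | base => linarith
    | succ n hn ih =>
      rcases lt_or_ge ‖F n‖ ε' with hsmall | hbig
      · have := htri n
        have := hcε' n (le_trans hMN hn)
        linarith
      · have h1 := hdec n (le_trans hMN hn) hbig
        have h2 : ‖F (n+1)‖^2 ≤ ‖F n‖^2 := by
          have : 0 ≤ δ * ε' * (c n * t n) :=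
            le_of_lt (mul_pos (mul_pos hδpos hε'pos) (mul_pos (hc n) (ht n).1))
          linarith
        have h3 : ‖F (n+1)‖ ≤ ‖F n‖ := by
          have := Real.sqrt_le_sqrt h2
          rwa [Real.sqrt_sq (norm_nonneg _), Real.sqrt_sq (norm_nonneg _)] at this
        linarith
  refine ⟨M, fun n hn => ?_⟩
  rw [Real.dist_eq, sub_zero, abs_of_nonneg (norm_nonneg _)]
  calc ‖F n‖ ≤ 2 * ε' := hstay n hn
    _ < ε := by rw [hε'def]; linarith
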